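/- Let (α_n) be a Markov chain on states {a_1, …, a_m} ⊂ ℝ^r with transition matrix P = I + εQ (Q a generator, ε small enough that P is stochastic), and suppose there exist C > 0, 0 < λ_c < 1 with ‖(I + εQ)^k − 𝟙ν_ε‖ ≤ C λ_c^k for all k, where ν_ε is a stationary probability vector of P. Then for every n, |Σ_{j=n}^∞ E[α_{j+1} − α_j | F_n]| ≤ K ε for a constant K depending only on C, λ_c, Q, and max_j |a_j|, where F_n is the σ-algebra generated by the chain up to time n. -/
import Mathlib


/-- Under geometric ergodicity of `P = I + εQ` (entrywise: `|(P^k)_{il} − ν_l| ≤ C λ_c^k`),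
the tail sum of conditional one-step drifts `Σ_{j≥n} E[α_{j+1} − α_j | α_n = a_i]
= Σ_{k≥0} Σ_l ((P^{k+1})_{il} − (P^k)_{il}) a_l` is bounded in norm by `K ε`, where `K`
depends only on `C`, `λ_c`, `Q`, and `max_j |a_j|`. -/
theorem stmt18 (m r : ℕ) (Q : Matrix (Fin m) (Fin m) ℝ)
    (hoff : ∀ i j, i ≠ j → 0 ≤ Q i j)
    (hrow : ∀ i, ∑ j, Q i j = 0)
    (a : Fin m → EuclideanSpace ℝ (Fin r))
    (C lamc : ℝ) (hC : 0 < C) (hl0 : 0 < lamc) (hl1 : lamc < 1) :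
    ∃ K : ℝ, ∀ ε : ℝ, 0 < ε →
      (∀ i j, 0 ≤ ((1 : Matrix (Fin m) (Fin m) ℝ) + ε • Q) i j) →
      ∀ ν : Fin m → ℝ, (∀ i, 0 ≤ ν i) → ∑ i, ν i = 1 →
      Matrix.vecMul ν ((1 : Matrix (Fin m) (Fin m) ℝ) + ε • Q) = ν →
      (∀ (k : ℕ) (i l : Fin m),
        |(((1 : Matrix (Fin m) (Fin m) ℝ) + ε • Q) ^ k) i l - ν l| ≤ C * lamc ^ k) →
      ∀ i : Fin m,
        ‖∑' k : ℕ, ∑ l : Fin m,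
          ((((1 : Matrix (Fin m) (Fin m) ℝ) + ε • Q) ^ (k + 1)) i l
            - (((1 : Matrix (Fin m) (Fin m) ℝ) + ε • Q) ^ k) i l) • a l‖ ≤ K * ε := by
  classical
  set A := ∑ l, ‖a l‖ with hA
  set QS := ∑ i, ∑ j, |Q i j| with hQS
  have hA0 : 0 ≤ A := Finset.sum_nonneg fun _ _ => norm_nonneg _
  have hQS0 : 0 ≤ QS := Finset.sum_nonneg fun _ _ =>
    Finset.sum_nonneg fun _ _ => abs_nonneg _
  refine ⟨C * QS * A / (1 - lamc), ?_⟩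
  intro ε hε hP ν hν0 hν1 hνstat herg i
  set P := (1 : Matrix (Fin m) (Fin m) ℝ) + ε • Q with hPdef
  have key : ∀ k l, (P ^ (k+1)) i l - (P ^ k) i l
      = ε * ∑ j, Q i j * ((P ^ k) j l - ν l) := by
    intro k l
    have hm : P ^ (k+1) = P ^ k + ε • (Q * P ^ k) := by
      rw [pow_succ', hPdef, add_mul, one_mul, Matrix.smul_mul]
    have hz : ∑ j, Q i j * ν l = 0 := by
      rw [← Finset.sum_mul, hrow i, zero_mul]
    have : (P ^ (k+1)) i l = (P ^ k) i l + ε * ∑ j, Q i j * (P ^ k) j l := by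
      rw [hm]; simp [Matrix.add_apply, Matrix.smul_apply, Matrix.mul_apply]
    have h2 : ∑ j, Q i j * ((P ^ k) j l - ν l) = ∑ j, Q i j * (P ^ k) j l := by
      simp [mul_sub, Finset.sum_sub_distrib, hz]
    rw [this, h2]; ring
  have hQrow : ∀ j : Fin m, ∑ l, |Q i l| ≤ QS := by
    intro j
    exact Finset.single_le_sum (f := fun i => ∑ j, |Q i j|)
      (fun _ _ => Finset.sum_nonneg fun _ _ => abs_nonneg _) (Finset.mem_univ i)
  have hb : ∀ k : ℕ, ‖∑ l : Fin m, ((P ^ (k+1)) i l - (P ^ k) i l) • a l‖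
      ≤ (ε * C * QS * A) * lamc ^ k := by
    intro k
    have hcoef : ∀ l, |(P ^ (k+1)) i l - (P ^ k) i l| ≤ ε * QS * (C * lamc ^ k) := by
      intro l
      rw [key k l, abs_mul, abs_of_pos hε]
      have h1 : |∑ j, Q i j * ((P ^ k) j l - ν l)| ≤ QS * (C * lamc ^ k) := by
        calc |∑ j, Q i j * ((P ^ k) j l - ν l)|
            ≤ ∑ j, |Q i j * ((P ^ k) j l - ν l)| := Finset.abs_sum_le_sum_abs _ _
          _ ≤ ∑ j, |Q i j| * (C * lamc ^ k) := by
              refine Finset.sum_le_sum fun j _ => ?_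
              rw [abs_mul]
              exact mul_le_mul_of_nonneg_left (herg k j l) (abs_nonneg _)
          _ = (∑ j, |Q i j|) * (C * lamc ^ k) := by rw [Finset.sum_mul]
          _ ≤ QS * (C * lamc ^ k) := by
              refine mul_le_mul_of_nonneg_right (hQrow i) ?_
              positivity
      calc ε * |∑ j, Q i j * ((P ^ k) j l - ν l)| ≤ ε * (QS * (C * lamc ^ k)) :=
            mul_le_mul_of_nonneg_left h1 hε.le
        _ = ε * QS * (C * lamc ^ k) := by ring
    calc ‖∑ l : Fin m, ((P ^ (k+1)) i l - (P ^ k) i l) • a l‖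
        ≤ ∑ l, ‖((P ^ (k+1)) i l - (P ^ k) i l) • a l‖ := norm_sum_le _ _
      _ ≤ ∑ l, (ε * QS * (C * lamc ^ k)) * ‖a l‖ := by
          refine Finset.sum_le_sum fun l _ => ?_
          rw [norm_smul, Real.norm_eq_abs]
          exact mul_le_mul_of_nonneg_right (hcoef l) (norm_nonneg _)
      _ = (ε * QS * (C * lamc ^ k)) * A := by rw [← Finset.mul_sum]
      _ = (ε * C * QS * A) * lamc ^ k := by ring
  have hgeo : Summable fun k : ℕ => (ε * C * QS * A) * lamc ^ k :=
    (summable_geometric_of_lt_one hl0.le hl1).mul_left _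
  have hsum : Summable fun k : ℕ =>
      ‖∑ l : Fin m, ((P ^ (k+1)) i l - (P ^ k) i l) • a l‖ :=
    Summable.of_nonneg_of_le (fun _ => norm_nonneg _) hb hgeo
  calc ‖∑' k : ℕ, ∑ l : Fin m, ((P ^ (k+1)) i l - (P ^ k) i l) • a l‖
      ≤ ∑' k : ℕ, ‖∑ l : Fin m, ((P ^ (k+1)) i l - (P ^ k) i l) • a l‖ :=
        norm_tsum_le_tsum_norm hsum
    _ ≤ ∑' k : ℕ, (ε * C * QS * A) * lamc ^ k := Summable.tsum_le_tsum hb hsum hgeo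
    _ = (ε * C * QS * A) * (1 - lamc)⁻¹ := by
        rw [tsum_mul_left, tsum_geometric_of_lt_one hl0.le hl1]
    _ = C * QS * A / (1 - lamc) * ε := by ring
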